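/- Let (X, τ) be a T0 co-Noetherian topological space, and equip X with its specialization order (x ≤ y iff x lies in the closure of {y}). Then (X, ≤) is a dcpo in which every antichain has a cover, i.e., (X, ≤) is a controllable dcpo. -/

import Mathlib

/-- A subset of a topological space is *saturated* if it equals the intersection of all
open sets containing it. -/
def IsSaturatedSet {Y : Type*} [TopologicalSpace Y] (A : Set Y) : Prop :=
  A = ⋂₀ {U : Set Y | IsOpen U ∧ A ⊆ U}

/-- A space is a *strong R-space* if for every family `𝒦` of compact saturated sets and
every open `U` with `⋂₀ 𝒦 ⊆ U`, some finite subfamily `ℱ ⊆ 𝒦` satisfies `⋂₀ ℱ ⊆ U`. -/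
def IsStrongRSpace (Y : Type*) [TopologicalSpace Y] : Prop :=
  ∀ 𝒦 : Set (Set Y), (∀ K ∈ 𝒦, IsCompact K ∧ IsSaturatedSet K) →
    ∀ U : Set Y, IsOpen U → ⋂₀ 𝒦 ⊆ U → ∃ ℱ ⊆ 𝒦, ℱ.Finite ∧ ⋂₀ ℱ ⊆ U

/-- A space is *coherent* if the intersection of any two compact saturated sets is compact. -/
def IsCoherentSpace (Y : Type*) [TopologicalSpace Y] : Prop :=
  ∀ K₁ K₂ : Set Y, IsCompact K₁ → IsSaturatedSet K₁ → IsCompact K₂ → IsSaturatedSet K₂ →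
    IsCompact (K₁ ∩ K₂)

/-- A space is *well-filtered* if for every (nonempty) filtered family `𝒞` of compact
saturated sets and every open `U` with `⋂₀ 𝒞 ⊆ U`, there exists `K ∈ 𝒞` with `K ⊆ U`. -/
def IsWellFilteredSpace (Y : Type*) [TopologicalSpace Y] : Prop :=
  ∀ 𝒞 : Set (Set Y), 𝒞.Nonempty → (∀ K ∈ 𝒞, IsCompact K ∧ IsSaturatedSet K) →
    (∀ A ∈ 𝒞, ∀ B ∈ 𝒞, ∃ C ∈ 𝒞, C ⊆ A ∩ B) →
    ∀ U : Set Y, IsOpen U → ⋂₀ 𝒞 ⊆ U → ∃ K ∈ 𝒞, K ⊆ U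

/-- Upper closure of a set with respect to the specialization order
(`a ≤ y` iff `a ∈ closure {y}`). -/
def specUpperClosure {Y : Type*} [TopologicalSpace Y] (A : Set Y) : Set Y :=
  {y | ∃ a ∈ A, a ∈ closure {y}}

/-- A space is an *R-space* if whenever an intersection of upper closures of finite sets
is contained in an open set `U`, a finite subintersection is already contained in `U`. -/
def IsRSpace (Y : Type*) [TopologicalSpace Y] : Prop :=
  ∀ (ι : Type*) (F : ι → Set Y), (∀ i, (F i).Finite) → ∀ U : Set Y, IsOpen U →
    (⋂ i, specUpperClosure (F i)) ⊆ U →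
    ∃ A : Set ι, A.Finite ∧ (⋂ i ∈ A, specUpperClosure (F i)) ⊆ U

/-- The Smyth powerspace: the set of nonempty compact saturated subsets. -/
def SmythPow (Y : Type*) [TopologicalSpace Y] : Type _ :=
  {K : Set Y // K.Nonempty ∧ IsCompact K ∧ IsSaturatedSet K}

/-- The topology of the Smyth powerspace, generated by `□U = {K | K ⊆ U}` for `U` open. -/
instance SmythPow.instTopologicalSpace {Y : Type*} [TopologicalSpace Y] :
    TopologicalSpace (SmythPow Y) :=
  TopologicalSpace.generateFrom
    {S | ∃ U : Set Y, IsOpen U ∧ S = {K : SmythPow Y | K.1 ⊆ U}}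

/-- A space is *co-Noetherian* if every closed set is the closure of a finite set. -/
def IsCoNoetherian (Y : Type*) [TopologicalSpace Y] : Prop :=
  ∀ C : Set Y, IsClosed C → ∃ F : Set Y, F.Finite ∧ C = closure F

/-- The patch topology: generated by the open sets together with complements of
compact saturated sets. -/
def patchTop (Y : Type*) [TopologicalSpace Y] : TopologicalSpace Y :=
  TopologicalSpace.generateFrom
    ({U : Set Y | IsOpen U} ∪ {S : Set Y | ∃ K : Set Y, IsCompact K ∧ IsSaturatedSet K ∧ S = Kᶜ})

/-- The strong (Skula) topology: generated by the open sets together with the closed sets. -/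
def skulaTop (Y : Type*) [TopologicalSpace Y] : TopologicalSpace Y :=
  TopologicalSpace.generateFrom ({U : Set Y | IsOpen U} ∪ {C : Set Y | IsClosed C})

/-- A space is *locally hypercompact* if every point has, inside each open neighbourhood `U`,
a finite set `F ⊆ U` with the point in the interior of the upper closure of `F`. -/
def IsLocallyHypercompact (Y : Type*) [TopologicalSpace Y] : Prop :=
  ∀ x : Y, ∀ U : Set Y, IsOpen U → x ∈ U →
    ∃ F : Set Y, F.Finite ∧ F ⊆ U ∧ x ∈ interior (specUpperClosure F)

/-- `U ≪ V` for open sets: every open cover of `V` has a finite subfamily covering `U`. -/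
def wayBelowOpen {Y : Type*} [TopologicalSpace Y] (U V : Set Y) : Prop :=
  ∀ 𝒞 : Set (Set Y), (∀ W ∈ 𝒞, IsOpen W) → V ⊆ ⋃₀ 𝒞 → ∃ 𝒟 ⊆ 𝒞, 𝒟.Finite ∧ U ⊆ ⋃₀ 𝒟

/-- A space is *open well-filtered* if for every (nonempty) `≪`-filtered family `ℱ` of open
sets and every open `U` with `⋂₀ ℱ ⊆ U`, there is `V ∈ ℱ` with `V ⊆ U`. -/
def IsOpenWellFiltered (Y : Type*) [TopologicalSpace Y] : Prop :=
  ∀ ℱ : Set (Set Y), ℱ.Nonempty → (∀ W ∈ ℱ, IsOpen W) →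
    (∀ U₁ ∈ ℱ, ∀ U₂ ∈ ℱ, ∃ U₃ ∈ ℱ, wayBelowOpen U₃ U₁ ∧ wayBelowOpen U₃ U₂) →
    ∀ U : Set Y, IsOpen U → ⋂₀ ℱ ⊆ U → ∃ V ∈ ℱ, V ⊆ U

/-- Lower closure of a set in a preorder. -/
def lowerCloSet {L : Type*} [Preorder L] (A : Set L) : Set L := {x | ∃ a ∈ A, x ≤ a}

/-- `F` is a *cover* of the antichain `C`: `F` is a finite antichain with `C ⊆ ↓F`, and
for every finite `G` with `C ⊆ ↓G` one has `F ⊆ ↓G`. -/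
def IsCoverOf {L : Type*} [Preorder L] (F C : Set L) : Prop :=
  F.Finite ∧ IsAntichain (· ≤ ·) F ∧ C ⊆ lowerCloSet F ∧
    ∀ G : Set L, G.Finite → C ⊆ lowerCloSet G → F ⊆ lowerCloSet G

/-- Specialization order: `x ≤ y` iff `x ∈ closure {y}`. -/
def specLE {Y : Type*} [TopologicalSpace Y] (x y : Y) : Prop := x ∈ closure {y}

/-- Lower closure with respect to the specialization order. -/
def specLowerClosure {Y : Type*} [TopologicalSpace Y] (A : Set Y) : Set Y :=
  {x | ∃ a ∈ A, specLE x a}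

section Aux
variable {X : Type*} [TopologicalSpace X]

lemma specLE_refl (x : X) : specLE x x := subset_closure rfl

lemma specLE_trans {x y z : X} (h1 : specLE x y) (h2 : specLE y z) : specLE x z := by
  have : closure ({y} : Set X) ⊆ closure {z} :=
    closure_minimal (Set.singleton_subset_iff.2 h2) isClosed_closure
  exact this h1

lemma specLE_antisymm [T0Space X] {x y : X} (h1 : specLE x y) (h2 : specLE y x) : x = y := by
  have hxy : y ⤳ x := specializes_iff_mem_closure.2 h1
  have hyx : x ⤳ y := specializes_iff_mem_closure.2 h2
  exact (hyx.antisymm hxy).eq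

lemma specLowerClosure_eq_closure {F : Set X} (hF : F.Finite) :
    specLowerClosure F = closure F := by
  have : F = ⋃ f ∈ F, ({f} : Set X) := by simp
  rw [this, hF.closure_biUnion]
  ext x
  simp [specLowerClosure, specLE]

/-- Every element of a finite set is below some maximal element. -/
lemma exists_spec_maximal [T0Space X] {F : Set X} (hF : F.Finite) {f : X} (hf : f ∈ F) :
    ∃ m ∈ F, specLE f m ∧ ∀ a ∈ F, specLE m a → a = m := by
  classical
  set S : Set X := {a ∈ F | specLE f a} with hS
  have hSfin : S.Finite := hF.subset (fun a ha => ha.1)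
  have hSne : S.Nonempty := ⟨f, hf, specLE_refl f⟩
  obtain ⟨m, hm, hmax⟩ := Set.Finite.exists_maximalFor
    (fun a => Specialization.toEquiv a) S hSfin hSne
  refine ⟨m, hm.1, hm.2, fun a ha hma => ?_⟩
  have haS : a ∈ S := ⟨ha, specLE_trans hm.2 hma⟩
  have hle : Specialization.toEquiv m ≤ Specialization.toEquiv a :=
    Specialization.toEquiv_le_toEquiv.2 (specializes_iff_mem_closure.2 hma)
  exact (Specialization.toEquiv.injective (le_antisymm hle (hmax haS hle))).symm

end Aux

lemma directed_upper_finite {X : Type*} [TopologicalSpace X] {D : Set X} (hne : D.Nonempty)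
    (hdir : ∀ a ∈ D, ∀ b ∈ D, ∃ c ∈ D, specLE a c ∧ specLE b c)
    {G : Set X} (hG : G.Finite) (hGD : G ⊆ D) : ∃ c ∈ D, ∀ g ∈ G, specLE g c := by
  revert hGD
  refine Set.Finite.induction_on G hG ?_ ?_
  · exact fun _ => ⟨hne.choose, hne.choose_spec, fun g hg => absurd hg (Set.notMem_empty g)⟩
  · intro x S hxS hS ih hGD
    obtain ⟨c, hcD, hc⟩ := ih (fun a ha => hGD (Set.mem_insert_of_mem x ha))
    obtain ⟨e, heD, hxe, hce⟩ := hdir x (hGD (Set.mem_insert x S)) c hcD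
    exact ⟨e, heD, fun g hg => hg.elim (fun h => h ▸ hxe)
      (fun h => specLE_trans (hc g h) hce)⟩

theorem stmt19 {X : Type*} [TopologicalSpace X] [T0Space X]
    (h : IsCoNoetherian X) :
    (∀ D : Set X, D.Nonempty → (∀ a ∈ D, ∀ b ∈ D, ∃ c ∈ D, specLE a c ∧ specLE b c) →
      ∃ s : X, (∀ d ∈ D, specLE d s) ∧ ∀ b : X, (∀ d ∈ D, specLE d b) → specLE s b) ∧
    (∀ C : Set X, IsAntichain specLE C → ∃ F : Set X, F.Finite ∧ IsAntichain specLE F ∧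
      C ⊆ specLowerClosure F ∧
      ∀ G : Set X, G.Finite → C ⊆ specLowerClosure G → F ⊆ specLowerClosure G) := by
  constructor
  · -- dcpo
    intro D hne hdir
    obtain ⟨F, hFfin, hFeq⟩ := h (closure D) isClosed_closure
    have hDlow : closure D = specLowerClosure F := by
      rw [specLowerClosure_eq_closure hFfin, ← hFeq]
    -- some element of F is an upper bound of D
    have hub : ∃ f ∈ F, ∀ d ∈ D, specLE d f := by
      by_contra hbad
      push_neg at hbad
      choose! d hdD hdn using hbad
      obtain ⟨c, hcD, hc⟩ := directed_upper_finite hne hdir (hFfin.image d)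
        (by rintro _ ⟨f, hf, rfl⟩; exact hdD f hf)
      have : c ∈ specLowerClosure F := by
        rw [← hDlow]; exact subset_closure hcD
      obtain ⟨f, hfF, hcf⟩ := this
      exact hdn f hfF (specLE_trans (hc _ (Set.mem_image_of_mem d hfF)) hcf)
    obtain ⟨f, hfF, hfub⟩ := hub
    refine ⟨f, hfub, fun b hb => ?_⟩
    have hf : f ∈ closure D := by
      rw [hFeq]; exact subset_closure hfF
    have : closure D ⊆ closure ({b} : Set X) :=
      closure_minimal (fun d hd => hb d hd) isClosed_closure
    exact this hf
  · -- covers for antichains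
    intro C _
    obtain ⟨F₀, hF₀fin, hF₀eq⟩ := h (closure C) isClosed_closure
    set M : Set X := {m ∈ F₀ | ∀ a ∈ F₀, specLE m a → a = m} with hM
    have hMfin : M.Finite := hF₀fin.subset fun a ha => ha.1
    refine ⟨M, hMfin, ?_, ?_, ?_⟩
    · intro m hm m' hm' hne hle
      exact hne ((hm.2 m' hm'.1 hle).symm)
    · intro c hc
      have : c ∈ specLowerClosure F₀ := by
        rw [specLowerClosure_eq_closure hF₀fin, ← hF₀eq]
        exact subset_closure hc
      obtain ⟨f, hfF, hcf⟩ := this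
      obtain ⟨m, hmF, hfm, hmax⟩ := exists_spec_maximal hF₀fin hfF
      exact ⟨m, ⟨hmF, hmax⟩, specLE_trans hcf hfm⟩
    · intro G hGfin hCG
      rw [specLowerClosure_eq_closure hGfin] at hCG ⊢
      have h1 : closure C ⊆ closure G := closure_minimal hCG isClosed_closure
      intro m hm
      have : m ∈ closure C := by rw [hF₀eq]; exact subset_closure hm.1
      exact h1 this
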